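/- Let d ≥ 1 and let P(x) = x·(x−1)⋯(x−d+1) ∈ ℚ[x] be the falling factorial polynomial of degree d. Then the following identity holds in ℚ[x]: P(x+2)·(P(x+1) + (d−1)·P(x)) = P(x+1)·((d+1)·P(x+1) − P(x)). Equivalently, the sequence of polynomials û_n = P(x+n) satisfies û_{n+2} = R(û_n, û_{n+1}) in ℚ(x), where R(y_0, y_1) = y_1·((d+1)·y_1 − y_0)/(y_1 + (d−1)·y_0). -/
import Mathlib


open Polynomial

lemma falling_shift_gen (d : ℕ) (a : ℚ) (P : Polynomial ℚ)
    (hP : P = ∏ j ∈ Finset.range d, (Polynomial.X - Polynomial.C ((j : ℚ) + a))) :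
    P.comp (Polynomial.X + Polynomial.C 1) *
        (Polynomial.X - Polynomial.C ((d : ℚ) - 1 + a)) =
      (Polynomial.X - Polynomial.C (a - 1)) * P := by
  have h1 : P.comp (Polynomial.X + Polynomial.C 1) =
      ∏ j ∈ Finset.range d, (Polynomial.X - Polynomial.C ((j : ℚ) - 1 + a)) := by
    rw [hP, Polynomial.prod_comp]
    refine Finset.prod_congr rfl fun j _ => ?_
    simp only [sub_comp, add_comp, X_comp, C_comp]
    rw [show ((j : ℚ) - 1 + a) = ((j : ℚ) + a) - 1 by ring, map_sub, map_one]
    ring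
  have hA : ∏ j ∈ Finset.range (d + 1), (Polynomial.X - Polynomial.C ((j : ℚ) - 1 + a)) =
      P.comp (Polynomial.X + Polynomial.C 1) *
        (Polynomial.X - Polynomial.C ((d : ℚ) - 1 + a)) := by
    rw [Finset.prod_range_succ, h1]
  have hB : ∏ j ∈ Finset.range (d + 1), (Polynomial.X - Polynomial.C ((j : ℚ) - 1 + a)) =
      (Polynomial.X - Polynomial.C (a - 1)) * P := by
    rw [Finset.prod_range_succ', hP]
    have h0 : ∀ j : ℕ, Polynomial.X - Polynomial.C (((j + 1 : ℕ) : ℚ) - 1 + a) =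
        Polynomial.X - Polynomial.C ((j : ℚ) + a) := by
      intro j; push_cast; ring_nf
    rw [Finset.prod_congr rfl fun j _ => h0 j]
    rw [show (((0 : ℕ) : ℚ) - 1 + a) = a - 1 by push_cast; ring]
    ring
  rw [← hA, hB]

/-- for the falling factorial polynomial
`P(x) = x(x−1)⋯(x−d+1)` of degree `d ≥ 1`, the identity
`P(x+2)·(P(x+1) + (d−1)·P(x)) = P(x+1)·((d+1)·P(x+1) − P(x))` holds in `ℚ[x]`. -/
theorem falling_factorial_identity (d : ℕ) (hd : 0 < d)
    (P : Polynomial ℚ)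
    (hP : P = ∏ j ∈ Finset.range d, (Polynomial.X - Polynomial.C (j : ℚ))) :
    P.comp (Polynomial.X + Polynomial.C 2) *
        (P.comp (Polynomial.X + Polynomial.C 1) + Polynomial.C ((d : ℚ) - 1) * P) =
      P.comp (Polynomial.X + Polynomial.C 1) *
        (Polynomial.C ((d : ℚ) + 1) * P.comp (Polynomial.X + Polynomial.C 1) - P) := by
  have h1 : P.comp (Polynomial.X + Polynomial.C 1) *
      (Polynomial.X - Polynomial.C ((d : ℚ) - 1)) =
      (Polynomial.X + Polynomial.C 1) * P := by
    have := falling_shift_gen d 0 P (by simpa using hP)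
    simpa using this
  have hQ : P.comp (Polynomial.X + Polynomial.C 1) =
      ∏ j ∈ Finset.range d, (Polynomial.X - Polynomial.C ((j : ℚ) + (-1))) := by
    rw [hP, Polynomial.prod_comp]
    refine Finset.prod_congr rfl fun j _ => ?_
    simp only [sub_comp, add_comp, X_comp, C_comp]
    rw [show ((j : ℚ) + (-1)) = (j : ℚ) - 1 by ring, map_sub, map_one]
    ring
  have h2' := falling_shift_gen d (-1) (P.comp (Polynomial.X + Polynomial.C 1)) hQ
  have hcomp : (P.comp (Polynomial.X + Polynomial.C 1)).comp
      (Polynomial.X + Polynomial.C 1) = P.comp (Polynomial.X + Polynomial.C 2) := by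
    rw [Polynomial.comp_assoc]
    congr 1
    simp only [add_comp, X_comp, C_comp]
    rw [show (2 : ℚ) = 1 + 1 by norm_num, map_add]
    ring
  rw [hcomp] at h2'
  rw [show ((d : ℚ) - 1 + (-1)) = (d : ℚ) - 2 by ring,
    show ((-1 : ℚ) - 1) = -2 by norm_num, map_neg, sub_neg_eq_add] at h2'
  have h2 := h2'
  have hnt : Nontrivial ℚ := inferInstance
  have hsne : (Polynomial.X - Polynomial.C ((d : ℚ) - 1)) ≠ 0 := Polynomial.X_sub_C_ne_zero _
  have htne : (Polynomial.X - Polynomial.C ((d : ℚ) - 2)) ≠ 0 := Polynomial.X_sub_C_ne_zero _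
  have hg : (Polynomial.X - Polynomial.C ((d : ℚ) - 1)) ^ 2 *
      (Polynomial.X - Polynomial.C ((d : ℚ) - 2)) ≠ 0 :=
    mul_ne_zero (pow_ne_zero _ hsne) htne
  apply mul_right_cancel₀ hg
  simp only [map_sub, map_add, map_one, map_ofNat] at h1 h2 ⊢
  set c : Polynomial ℚ := Polynomial.C ((d : ℚ)) with hc
  set s : Polynomial ℚ := Polynomial.X - (c - 1) with hs
  set t : Polynomial ℚ := Polynomial.X - (c - 2) with ht
  set u : Polynomial ℚ := Polynomial.X + 1 with hu
  set v : Polynomial ℚ := Polynomial.X + 2 with hv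
  linear_combination
    (s * (P.comp u * (v - t * (c + 1)) + P * (v * (c - 1) + t)) +
      u * P * (v - t * (c + 1))) * h1 +
    (s ^ 2 * (P.comp u + (c - 1) * P)) * h2
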